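/- (Corollary 6.34: T(H)² = T(H).) Every trace class operator factors through the trace class: for every R : H →L[K] H of trace class there exist S, T : H →L[K] H, both of trace class, such that R = S ∘ T (i.e. R x = S (T x) for all x : H). -/

import Mathlib

open Filter

noncomputable section

variable (K : Type*) [NontriviallyNormedField K] [IsUltrametricDist K]
  [CompleteSpace K] [StarRing K] [NormedStarGroup K]

/-- The p-adic coordinate Hilbert space: zero-convergent sequences in `K` with sup norm. -/
abbrev H := ZeroAtInftyContinuousMap ℕ K

/-- The standard basis vectors of `H K`. -/
def e (n : ℕ) : H K where
  toFun := fun m => if m = n then 1 else 0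
  continuous_toFun := continuous_of_discreteTopology
  zero_at_infty' := by
    rw [cocompact_eq_atTop]
    refine Filter.Tendsto.congr' ?_ tendsto_const_nhds
    filter_upwards [Filter.eventually_gt_atTop n] with m hm
    simp [Nat.ne_of_gt hm]

/-- The canonical inner product on `H K`: `⟪x, y⟫ = ∑' i, star (x i) * y i`. -/
def inner' (x y : H K) : K := ∑' i, star (x i) * y i

/-- A bounded operator is of trace class if its matrix entries vanish along the
cofinite filter of `ℕ × ℕ`. -/
def IsTraceClass (T : H K →L[K] H K) : Prop :=
  Tendsto (fun q : ℕ × ℕ => (T (e K q.2)) q.1) Filter.cofinite (nhds 0)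

-- aux: pointwise norm bound
theorem aux_apply_le (f : H K) (i : ℕ) : ‖f i‖ ≤ ‖f‖ :=
  f.toBCF.norm_coe_le_norm i

theorem aux_norm_le (f : H K) {C : ℝ} (hC : 0 ≤ C) (h : ∀ i, ‖f i‖ ≤ C) : ‖f‖ ≤ C := by
  rw [← ZeroAtInftyContinuousMap.norm_toBCF_eq_norm]
  exact (BoundedContinuousFunction.norm_le hC).2 h

-- evaluation as a continuous linear map
def ev (i : ℕ) : H K →L[K] K :=
  LinearMap.mkContinuous
    { toFun := fun f => f i
      map_add' := fun f g => by simp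
      map_smul' := fun c f => by simp }
    1 (fun f => by simpa using aux_apply_le K f i)

@[simp] theorem ev_apply (i : ℕ) (f : H K) : ev K i f = f i := rfl

@[simp] theorem e_apply (n m : ℕ) : e K n m = if m = n then 1 else 0 := rfl

theorem aux_partial (x : H K) :
    Tendsto (fun n => ∑ j ∈ Finset.range n, x j • e K j) atTop (nhds x) := by
  have hP : ∀ n m, (∑ j ∈ Finset.range n, x j • e K j) m = if m < n then x m else 0 := by
    intro n m
    rw [← ev_apply, map_sum]
    simp [mul_ite, Finset.sum_ite_eq, Finset.mem_range]
  rw [Metric.tendsto_atTop]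
  intro ε hε
  have hz : Tendsto (fun m => ‖x m‖) atTop (nhds 0) := by
    have := x.zero_at_infty'
    rw [cocompact_eq_atTop] at this
    simpa using this.norm
  obtain ⟨N, hN⟩ := (Metric.tendsto_atTop.mp hz (ε / 2) (half_pos hε))
  refine ⟨N, fun n hn => ?_⟩
  rw [dist_eq_norm]
  refine lt_of_le_of_lt (aux_norm_le K _ (by positivity) fun m => ?_) (half_lt_self hε)
  rw [ZeroAtInftyContinuousMap.coe_sub, Pi.sub_apply, hP]
  by_cases h : m < n
  · rw [if_pos h, sub_self, norm_zero]; positivity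
  · rw [if_neg h, zero_sub, norm_neg]
    have := hN m (le_trans hn (not_lt.mp h))
    rw [Real.dist_eq, sub_zero, abs_of_nonneg (norm_nonneg _)] at this
    exact this.le

theorem aux_row (R : H K →L[K] H K) (x : H K) (i : ℕ) {ri : ℝ}
    (hri : ∀ j, ‖(R (e K j)) i‖ ≤ ri) : ‖(R x) i‖ ≤ ri * ‖x‖ := by
  have h0 : 0 ≤ ri := le_trans (norm_nonneg _) (hri 0)
  have ht : Tendsto (fun n => (R (∑ j ∈ Finset.range n, x j • e K j)) i) atTop
      (nhds ((R x) i)) :=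
    ((ev K i).continuous.tendsto _).comp ((R.continuous.tendsto x).comp (aux_partial K x))
  refine le_of_tendsto ht.norm (Filter.Eventually.of_forall fun n => ?_)
  have : (R (∑ j ∈ Finset.range n, x j • e K j)) i
      = ∑ j ∈ Finset.range n, x j • ((R (e K j)) i) := by
    rw [map_sum]
    rw [← ev_apply, map_sum]
    simp
  rw [this]
  refine IsUltrametricDist.norm_sum_le_of_forall_le_of_nonneg (by positivity) fun j _ => ?_
  rw [smul_eq_mul, norm_mul]
  exact mul_le_mul (aux_apply_le K x j) (hri j) (norm_nonneg _) (norm_nonneg _) |>.trans_eq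
    (mul_comm _ _) |>.trans_eq rfl

theorem aux_between {c : K} (hc : 1 < ‖c‖) {x : ℝ} (hx : 0 < x) :
    ∃ k : K, x ≤ ‖k‖ ∧ ‖k‖ ≤ x * ‖c‖ := by
  have hc0 : 0 < ‖c‖ := lt_trans one_pos hc
  set n : ℤ := ⌈Real.logb ‖c‖ x⌉ with hn
  refine ⟨c ^ n, ?_, ?_⟩
  · rw [norm_zpow, ← Real.rpow_intCast]
    calc x = ‖c‖ ^ Real.logb ‖c‖ x := (Real.rpow_logb hc0 (ne_of_gt hc) hx).symm
    _ ≤ ‖c‖ ^ (n : ℝ) := by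
        exact Real.rpow_le_rpow_left_iff hc |>.mpr (Int.le_ceil _)
  · rw [norm_zpow, ← Real.rpow_intCast]
    calc ‖c‖ ^ (n : ℝ) ≤ ‖c‖ ^ (Real.logb ‖c‖ x + 1) := by
          refine Real.rpow_le_rpow_left_iff hc |>.mpr ?_
          exact_mod_cast (Int.ceil_lt_add_one _).le
    _ = x * ‖c‖ := by
        rw [Real.rpow_add hc0, Real.rpow_logb hc0 (ne_of_gt hc) hx, Real.rpow_one]

theorem aux_cof {ι : Type*} (f : ι → K) :
    Tendsto f cofinite (nhds 0) ↔ ∀ ε > 0, {q | ε ≤ ‖f q‖}.Finite := by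
  rw [NormedAddCommGroup.tendsto_nhds_zero]
  refine forall₂_congr fun ε hε => ?_
  rw [eventually_cofinite]
  congr! 2
  ext q
  simp [not_lt]

theorem he1 (j : ℕ) : ‖e K j‖ ≤ 1 :=
  aux_norm_le K _ zero_le_one fun m => by
    rw [e_apply]; split <;> simp


/-- `T(H)² = T(H)`: every trace class operator is a product of two trace class operators. -/
theorem stmt18 (R : H K →L[K] H K) (hR : IsTraceClass K R) :
    ∃ S T : H K →L[K] H K, IsTraceClass K S ∧ IsTraceClass K T ∧
      ∀ x : H K, R x = S (T x) := by
  obtain ⟨c, hc⟩ := NormedField.exists_one_lt_norm K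
  set a : ℕ → ℕ → K := fun i j => (R (e K j)) i with ha
  have hRej : ∀ j, ‖R (e K j)‖ ≤ ‖R‖ := fun j => by
    calc ‖R (e K j)‖ ≤ ‖R‖ * ‖e K j‖ := R.le_opNorm _
    _ ≤ ‖R‖ * 1 := mul_le_mul_of_nonneg_left (he1 K j) (norm_nonneg R)
    _ = ‖R‖ := mul_one _
  have hbdd : ∀ i, BddAbove (Set.range fun j => ‖a i j‖) := by
    intro i
    refine ⟨‖R‖, ?_⟩
    rintro _ ⟨j, rfl⟩
    exact le_trans (aux_apply_le K _ i) (hRej j)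
  set r : ℕ → ℝ := fun i => ⨆ j, ‖a i j‖ with hrdef
  have hra : ∀ i j, ‖a i j‖ ≤ r i := fun i j => le_ciSup (hbdd i) j
  have hr0 : ∀ i, 0 ≤ r i := fun i => le_trans (norm_nonneg _) (hra i 0)
  have hrR : ∀ i, r i ≤ ‖R‖ := fun i =>
    ciSup_le fun j => le_trans (aux_apply_le K _ i) (hRej j)
  set s : ℕ → ℝ := fun i => Real.sqrt (r i) with hsdef
  have hs0 : ∀ i, 0 ≤ s i := fun i => Real.sqrt_nonneg _
  have hsR : ∀ i, s i ≤ Real.sqrt ‖R‖ := fun i => Real.sqrt_le_sqrt (hrR i)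
  have hfin : ∀ ε > 0, {q : ℕ × ℕ | ε ≤ ‖a q.1 q.2‖}.Finite := (aux_cof K _).mp hR
  have hsfin : ∀ ε > 0, {i | ε ≤ s i}.Finite := by
    intro ε hε
    have h2 := hfin (ε ^ 2 / 2) (by positivity)
    refine (h2.image Prod.fst).subset ?_
    intro i hi
    have h1 : ε ^ 2 ≤ r i := (Real.le_sqrt hε.le (hr0 i)).mp hi
    obtain ⟨j, hj⟩ := exists_lt_of_lt_ciSup
      (lt_of_lt_of_le (by nlinarith : ε ^ 2 / 2 < ε ^ 2) h1)
    exact ⟨(i, j), hj.le, rfl⟩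
  have hspos : ∀ i, r i ≠ 0 → 0 < s i := fun i h =>
    Real.sqrt_pos.mpr (lt_of_le_of_ne (hr0 i) (Ne.symm h))
  have hchoice : ∀ i, ∃ k : K, (r i = 0 → k = 0) ∧
      (r i ≠ 0 → s i ≤ ‖k‖ ∧ ‖k‖ ≤ s i * ‖c‖) := by
    intro i
    by_cases h : r i = 0
    · exact ⟨0, fun _ => rfl, fun h' => absurd h h'⟩
    · obtain ⟨k, hk1, hk2⟩ := aux_between K hc (hspos i h)
      exact ⟨k, fun h' => absurd h' h, fun _ => ⟨hk1, hk2⟩⟩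
  choose d hd0 hd1 using hchoice
  have hdub : ∀ i, ‖d i‖ ≤ s i * ‖c‖ := by
    intro i
    by_cases h : r i = 0
    · rw [hd0 i h, norm_zero]; positivity
    · exact (hd1 i h).2
  have hdlb : ∀ i, r i ≠ 0 → s i ≤ ‖d i‖ := fun i h => (hd1 i h).1
  have hkey : ∀ (x : H K) i, ‖(d i)⁻¹ * (R x) i‖ ≤ s i * ‖x‖ := by
    intro x i
    have hrow : ‖(R x) i‖ ≤ r i * ‖x‖ := aux_row K R x i (hra i)
    by_cases h : r i = 0
    · have hz : (R x) i = 0 := norm_le_zero_iff.mp (by simpa [h] using hrow)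
      rw [hz, mul_zero, norm_zero]
      positivity
    · have hd : 0 < ‖d i‖ := lt_of_lt_of_le (hspos i h) (hdlb i h)
      rw [norm_mul, norm_inv]
      calc ‖d i‖⁻¹ * ‖(R x) i‖ ≤ (s i)⁻¹ * (r i * ‖x‖) :=
            mul_le_mul (inv_anti₀ (hspos i h) (hdlb i h)) hrow
              (norm_nonneg _) (by positivity)
      _ = s i * ‖x‖ := by
            rw [← mul_assoc]
            congr 1
            rw [inv_mul_eq_div, Real.div_sqrt]
  have hstend : Tendsto s atTop (nhds 0) := by
    rw [← Nat.cofinite_eq_atTop]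
    refine Metric.tendsto_nhds.mpr fun ε hε => ?_
    rw [eventually_cofinite]
    refine (hsfin ε hε).subset fun i hi => ?_
    simp only [Set.mem_setOf_eq, Real.dist_eq, sub_zero, not_lt,
      abs_of_nonneg (hs0 i)] at hi ⊢
    exact hi
  -- the inner operator T
  have memT : ∀ x : H K, Tendsto (fun i => (d i)⁻¹ * (R x) i) (Filter.cocompact ℕ) (nhds 0) := by
    intro x
    rw [cocompact_eq_atTop]
    refine squeeze_zero_norm (fun i => hkey x i) ?_
    simpa using hstend.mul_const ‖x‖
  let Tf : H K → H K := fun x =>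
    ⟨⟨fun i => (d i)⁻¹ * (R x) i, continuous_of_discreteTopology⟩, memT x⟩
  let T : H K →L[K] H K := LinearMap.mkContinuous
    { toFun := Tf
      map_add' := fun x y => by
        ext i
        show (d i)⁻¹ * (R (x + y)) i = (d i)⁻¹ * (R x) i + (d i)⁻¹ * (R y) i
        rw [map_add, ZeroAtInftyContinuousMap.coe_add, Pi.add_apply, mul_add]
      map_smul' := fun k x => by
        ext i
        show (d i)⁻¹ * (R (k • x)) i = k * ((d i)⁻¹ * (R x) i)
        rw [map_smul, ZeroAtInftyContinuousMap.coe_smul, Pi.smul_apply, smul_eq_mul]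
        ring }
    (Real.sqrt ‖R‖) (fun x => by
      refine aux_norm_le K _ (by positivity) fun i => ?_
      exact (hkey x i).trans (mul_le_mul_of_nonneg_right (hsR i) (norm_nonneg x)))
  -- the outer diagonal operator D
  have memD : ∀ x : H K, Tendsto (fun i => d i * x i) (Filter.cocompact ℕ) (nhds 0) := by
    intro x
    rw [cocompact_eq_atTop]
    have hx : Tendsto (fun i => x i) atTop (nhds 0) := by
      have := x.zero_at_infty'
      rwa [cocompact_eq_atTop] at this
    refine squeeze_zero_norm (a := fun i => (Real.sqrt ‖R‖ * ‖c‖) * ‖x i‖) (fun i => ?_) ?_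
    · rw [norm_mul]
      refine mul_le_mul ((hdub i).trans ?_) le_rfl (norm_nonneg _) (by positivity)
      gcongr
      exact hsR i
    · simpa using (hx.norm.const_mul (Real.sqrt ‖R‖ * ‖c‖))
  let Df : H K → H K := fun x =>
    ⟨⟨fun i => d i * x i, continuous_of_discreteTopology⟩, memD x⟩
  let D : H K →L[K] H K := LinearMap.mkContinuous
    { toFun := Df
      map_add' := fun x y => by
        ext i
        show d i * (x + y) i = d i * x i + d i * y i
        rw [ZeroAtInftyContinuousMap.coe_add, Pi.add_apply, mul_add]
      map_smul' := fun k x => by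
        ext i
        show d i * (k • x) i = k * (d i * x i)
        rw [ZeroAtInftyContinuousMap.coe_smul, Pi.smul_apply, smul_eq_mul]
        ring }
    (Real.sqrt ‖R‖ * ‖c‖) (fun x => by
      refine aux_norm_le K _ (by positivity) fun i => ?_
      show ‖d i * x i‖ ≤ Real.sqrt ‖R‖ * ‖c‖ * ‖x‖
      rw [norm_mul]
      refine mul_le_mul ((hdub i).trans ?_) (aux_apply_le K x i)
        (norm_nonneg _) (by positivity)
      gcongr
      exact hsR i)
  refine ⟨D, T, ?_, ?_, ?_⟩
  · rw [IsTraceClass, aux_cof]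
    intro ε hε
    have hc0 : (0:ℝ) < ‖c‖ := lt_trans one_pos hc
    refine ((hsfin (ε / ‖c‖) (div_pos hε hc0)).image fun i => (i, i)).subset ?_
    rintro ⟨i, j⟩ hq
    have happ : (D (e K j)) i = d i * (e K j) i := rfl
    by_cases h : i = j
    · subst h
      refine ⟨i, ?_, rfl⟩
      rw [Set.mem_setOf_eq, happ, e_apply, if_pos rfl, mul_one] at hq
      rw [Set.mem_setOf_eq, div_le_iff₀ hc0]
      exact hq.trans (hdub i)
    · rw [Set.mem_setOf_eq, happ, e_apply, if_neg h, mul_zero, norm_zero] at hq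
      linarith
  · rw [IsTraceClass, aux_cof]
    intro ε hε
    refine (hfin (ε * ε) (by positivity)).subset ?_
    rintro ⟨i, j⟩ hq
    have happ : (T (e K j)) i = (d i)⁻¹ * (R (e K j)) i := rfl
    rw [Set.mem_setOf_eq, happ] at hq
    have h1 : ε ≤ s i := by
      refine hq.trans ((hkey (e K j) i).trans ?_)
      calc s i * ‖e K j‖ ≤ s i * 1 := mul_le_mul_of_nonneg_left (he1 K j) (hs0 i)
      _ = s i := mul_one _
    have hrne : r i ≠ 0 := by
      intro h
      have : s i = 0 := by rw [hsdef]; simp [h]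
      linarith
    have hdpos : 0 < ‖d i‖ := lt_of_lt_of_le (hspos i hrne) (hdlb i hrne)
    have hdne : d i ≠ 0 := norm_pos_iff.mp hdpos
    have heq : ‖(R (e K j)) i‖ = ‖d i‖ * ‖(d i)⁻¹ * (R (e K j)) i‖ := by
      rw [norm_mul, norm_inv, ← mul_assoc, mul_inv_cancel₀ (ne_of_gt hdpos), one_mul]
    show ε * ε ≤ ‖a i j‖
    rw [ha]
    rw [heq]
    exact mul_le_mul (h1.trans (hdlb i hrne)) hq hε.le (norm_nonneg _)
  · intro x
    ext i
    have happ : (D (T x)) i = d i * ((d i)⁻¹ * (R x) i) := rfl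
    rw [happ]
    by_cases h : r i = 0
    · have hz : (R x) i = 0 :=
        norm_le_zero_iff.mp (by simpa [h] using aux_row K R x i (hra i))
      rw [hz, hd0 i h]
      simp
    · have hdne : d i ≠ 0 := by
        have := lt_of_lt_of_le (hspos i h) (hdlb i h)
        exact norm_pos_iff.mp this
      rw [mul_inv_cancel_left₀ hdne]
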